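/- Let R be a commutative ring, q, q' ∈ R nilpotent, and α : R[[x₁,x₂]]/(x₁x₂ − q') → R[[x₁,x₂]]/(x₁x₂ − q) a continuous R-algebra isomorphism sending the ideal (x₁) to (x₁) and (x₂) to (x₂). Then there is a unique λ ∈ R^* such that α factors as the isomorphism x₁ ↦ λx₁, x₂ ↦ x₂ (which requires q' = λq), followed by an automorphism of R[[x₁,x₂]]/(x₁x₂ − q) of the form x₁ ↦ x₁u, x₂ ↦ x₂u^{-1} for some unit u. -/

import Mathlib

/-- `A(R) = R[[x₁,x₂]]/(x₁x₂ - q)`. -/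
noncomputable abbrev NodeAlg (R : Type*) [CommRing R] (q : R) :=
  MvPowerSeries (Fin 2) R ⧸
    Ideal.span {MvPowerSeries.X (0 : Fin 2) * MvPowerSeries.X 1 - MvPowerSeries.C (σ := Fin 2) (R := R) q}

/-- The projection `R[[x₁,x₂]] → A(R)`. -/
noncomputable abbrev nodeMk (R : Type*) [CommRing R] (q : R) :
    MvPowerSeries (Fin 2) R →+* NodeAlg R q :=
  Ideal.Quotient.mk _

set_option linter.unnecessarySeqFocus false
set_option linter.unusedVariables false

namespace NodeAux
open MvPowerSeries Finset

variable {R : Type*} [CommRing R]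

/-- abbreviation for bivariate power series -/
abbrev PS (R : Type*) [CommRing R] := MvPowerSeries (Fin 2) R

noncomputable def dd (i j : ℕ) : Fin 2 →₀ ℕ := Finsupp.single 0 i + Finsupp.single 1 j

@[simp] lemma dd_apply0 (i j : ℕ) : dd i j 0 = i := by
  simp [dd, Finsupp.single_apply]

@[simp] lemma dd_apply1 (i j : ℕ) : dd i j 1 = j := by
  simp [dd, Finsupp.single_apply]

lemma eq_dd (e : Fin 2 →₀ ℕ) : e = dd (e 0) (e 1) := by
  ext x
  fin_cases x <;> simp

@[simp] lemma dd_zero : dd 0 0 = 0 := by simp [dd]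

lemma zero_iff (e : Fin 2 →₀ ℕ) : e = 0 ↔ e 0 = 0 ∧ e 1 = 0 := by
  constructor
  · rintro rfl; simp
  · rintro ⟨h0, h1⟩; rw [eq_dd e, h0, h1, dd_zero]

lemma dd_eq_zero_iff (i j : ℕ) : dd i j = 0 ↔ i = 0 ∧ j = 0 := by
  rw [zero_iff]; simp

lemma single0_le_dd (i j : ℕ) : Finsupp.single (0 : Fin 2) 1 ≤ dd i j ↔ 1 ≤ i := by
  rw [Finsupp.le_def]
  constructor
  · intro h; simpa using h 0
  · intro h x; fin_cases x <;> simp [Finsupp.single_apply] <;> omega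

lemma single1_le_dd (i j : ℕ) : Finsupp.single (1 : Fin 2) 1 ≤ dd i j ↔ 1 ≤ j := by
  rw [Finsupp.le_def]
  constructor
  · intro h; simpa using h 1
  · intro h x; fin_cases x <;> simp [Finsupp.single_apply] <;> omega

lemma dd_sub_single0 (i j : ℕ) : dd i j - Finsupp.single (0 : Fin 2) 1 = dd (i - 1) j := by
  ext x; fin_cases x <;> simp [Finsupp.tsub_apply, Finsupp.single_apply]

lemma dd_sub_single1 (i j : ℕ) : dd i j - Finsupp.single (1 : Fin 2) 1 = dd i (j - 1) := by
  ext x; fin_cases x <;> simp [Finsupp.tsub_apply, Finsupp.single_apply]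

lemma dd11_le (i j : ℕ) : dd 1 1 ≤ dd i j ↔ 1 ≤ i ∧ 1 ≤ j := by
  rw [Finsupp.le_def]
  constructor
  · intro h; constructor
    · simpa using h 0
    · simpa using h 1
  · rintro ⟨h0, h1⟩ x; fin_cases x <;> simpa

lemma dd_sub_dd11 (i j : ℕ) : dd i j - dd 1 1 = dd (i - 1) (j - 1) := by
  ext x; fin_cases x <;> simp [Finsupp.tsub_apply]

-- pointwise ops
lemma add_apply' (F G : PS R) (e : Fin 2 →₀ ℕ) : (F + G) e = F e + G e := rfl
lemma sub_apply' (F G : PS R) (e : Fin 2 →₀ ℕ) : (F - G) e = F e - G e := rfl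

lemma coeff_eq (F : PS R) (e : Fin 2 →₀ ℕ) : MvPowerSeries.coeff e F = F e := rfl



variable (q : R) (n : ℕ)

/-- the generator `x₁x₂ - q` -/
noncomputable def gq : PS R := MvPowerSeries.X 0 * MvPowerSeries.X 1 - MvPowerSeries.C (σ := Fin 2) (R := R) q

/-- normal form -/
noncomputable def NN (F : PS R) : PS R := fun d =>
  if d 1 = 0 then ∑ m ∈ range n, q ^ m * F (dd (d 0 + m) m)
  else if d 0 = 0 then ∑ m ∈ range n, q ^ m * F (dd m (d 1 + m))
  else 0

/-- quotient in the division by `x₁x₂ - q` -/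
noncomputable def GG (F : PS R) : PS R := fun d =>
  ∑ m ∈ range n, q ^ m * F (dd (d 0 + 1 + m) (d 1 + 1 + m))

lemma NN_dd0 (F : PS R) (i : ℕ) :
    NN q n F (dd i 0) = ∑ m ∈ range n, q ^ m * F (dd (i + m) m) := by
  simp [NN]

lemma NN_dd1 (F : PS R) (i j : ℕ) (hj : j ≠ 0) (hi : i = 0) :
    NN q n F (dd i j) = ∑ m ∈ range n, q ^ m * F (dd m (j + m)) := by
  simp [NN, hj, hi]

lemma NN_off (F : PS R) (e : Fin 2 →₀ ℕ) (h0 : e 0 ≠ 0) (h1 : e 1 ≠ 0) :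
    NN q n F e = 0 := by
  simp [NN, h0, h1]

lemma coeff_XX_mul (H : PS R) (e : Fin 2 →₀ ℕ) :
    ((MvPowerSeries.X (0 : Fin 2) * MvPowerSeries.X 1 * H : PS R)) e =
      if dd 1 1 ≤ e then H (e - dd 1 1) else 0 := by
  have hX : (MvPowerSeries.X (0 : Fin 2) * MvPowerSeries.X 1 : PS R) =
      MvPowerSeries.monomial (dd 1 1) 1 := by
    rw [MvPowerSeries.X, MvPowerSeries.X, MvPowerSeries.monomial_mul_monomial, one_mul]
    rfl
  have h := MvPowerSeries.coeff_monomial_mul e (dd 1 1) H (1 : R)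
  rw [← hX] at h
  simpa [coeff_eq] using h

lemma coeff_gq_mul (H : PS R) (e : Fin 2 →₀ ℕ) :
    ((gq q * H : PS R)) e = (if dd 1 1 ≤ e then H (e - dd 1 1) else 0) - q * H e := by
  have hc : ((MvPowerSeries.C (σ := Fin 2) (R := R) q * H : PS R)) e = q * H e :=
    MvPowerSeries.coeff_C_mul e H q
  rw [gq, sub_mul, sub_apply', coeff_XX_mul, hc]

lemma coeff_X0_mul (H : PS R) (e : Fin 2 →₀ ℕ) :
    ((MvPowerSeries.X (0 : Fin 2) * H : PS R)) e =
      if Finsupp.single (0 : Fin 2) 1 ≤ e then H (e - Finsupp.single 0 1) else 0 := by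
  have h := MvPowerSeries.coeff_monomial_mul e (Finsupp.single (0 : Fin 2) 1) H (1 : R)
  rw [show ((MvPowerSeries.monomial (Finsupp.single (0 : Fin 2) 1)) (1:R)) =
    (MvPowerSeries.X (0 : Fin 2) : PS R) from rfl] at h
  simpa [coeff_eq] using h

lemma coeff_X1_mul (H : PS R) (e : Fin 2 →₀ ℕ) :
    ((MvPowerSeries.X (1 : Fin 2) * H : PS R)) e =
      if Finsupp.single (1 : Fin 2) 1 ≤ e then H (e - Finsupp.single 1 1) else 0 := by
  have h := MvPowerSeries.coeff_monomial_mul e (Finsupp.single (1 : Fin 2) 1) H (1 : R)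
  rw [show ((MvPowerSeries.monomial (Finsupp.single (1 : Fin 2) 1)) (1:R)) =
    (MvPowerSeries.X (1 : Fin 2) : PS R) from rfl] at h
  simpa [coeff_eq] using h

/-- telescoping helper -/
lemma tele (f : ℕ → R) (hf : ∀ m, n ≤ m + 1 → f m = 0) :
    ∑ m ∈ range n, ((if 1 ≤ m then f (m - 1) else 0) - f m) = 0 := by
  rcases n with _ | n'
  · simp
  · rw [Finset.sum_range_succ']
    have h1 : ∀ m, ((if 1 ≤ m + 1 then f (m + 1 - 1) else 0) - f (m + 1)) = f m - f (m + 1) := by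
      intro m; simp
    simp only [h1]
    rw [Finset.sum_range_sub' f n']
    have h2 : f n' = 0 := hf n' le_rfl
    simp [h2]


lemma N_spec (hn : q ^ n = 0) (F : PS R) (e : Fin 2 →₀ ℕ) :
    (F - NN q n F) e = ((gq q * GG q n F : PS R)) e := by
  obtain ⟨i, j, rfl⟩ : ∃ i j, e = dd i j := ⟨e 0, e 1, eq_dd e⟩
  rw [sub_apply', coeff_gq_mul]
  rcases Nat.eq_zero_or_pos j with hj | hj
  · subst hj
    -- j = 0 case
    rw [NN_dd0]
    have hcond : ¬ (dd 1 1 ≤ dd i 0) := by rw [dd11_le]; omega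
    rw [if_neg hcond, GG]
    simp only [dd_apply0, dd_apply1, zero_add]
    rw [Finset.mul_sum]
    have h1 : ∀ m, q * (q ^ m * F (dd (i + 1 + m) (0 + 1 + m))) =
        q ^ (m+1) * F (dd (i + (m+1)) (m+1)) := by
      intro m
      rw [show i + 1 + m = i + (m+1) from by omega, show 0 + 1 + m = m + 1 from by omega]
      ring
    simp only [h1]
    have h2 : ∑ m ∈ range n, q ^ (m+1) * F (dd (i + (m+1)) (m+1)) =
        ∑ m ∈ range (n+1), q ^ m * F (dd (i + m) m) - q ^ 0 * F (dd (i+0) 0) := by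
      rw [Finset.sum_range_succ']; ring
    rw [h2, Finset.sum_range_succ, hn]
    simp
  · rcases Nat.eq_zero_or_pos i with hi | hi
    · subst hi
      -- i = 0, j ≥ 1
      rw [NN_dd1 q n F 0 j (by omega) rfl]
      have hcond : ¬ (dd 1 1 ≤ dd 0 j) := by rw [dd11_le]; omega
      rw [if_neg hcond, GG]
      simp only [dd_apply0, dd_apply1, zero_add]
      rw [Finset.mul_sum]
      have h1 : ∀ m, q * (q ^ m * F (dd (1 + m) (j + 1 + m))) =
          q ^ (m+1) * F (dd (m+1) (j + (m+1))) := by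
        intro m
        rw [show 1 + m = m + 1 from by omega, show j + 1 + m = j + (m+1) from by omega]
        ring
      simp only [h1]
      have h2 : ∑ m ∈ range n, q ^ (m+1) * F (dd (m+1) (j + (m+1))) =
          ∑ m ∈ range (n+1), q ^ m * F (dd m (j + m)) - q ^ 0 * F (dd 0 (j+0)) := by
        rw [Finset.sum_range_succ']; ring
      rw [h2, Finset.sum_range_succ, hn]
      simp
    · -- i ≥ 1, j ≥ 1
      rw [NN_off q n F _ (by simpa using by omega) (by simpa using by omega)]
      have hcond : dd 1 1 ≤ dd i j := by rw [dd11_le]; omega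
      rw [if_pos hcond, dd_sub_dd11, GG, GG]
      simp only [dd_apply0, dd_apply1]
      rw [Finset.mul_sum]
      have h1 : ∀ m, q ^ m * F (dd (i - 1 + 1 + m) (j - 1 + 1 + m)) =
          q ^ m * F (dd (i + m) (j + m)) := by
        intro m
        rw [show i - 1 + 1 + m = i + m from by omega, show j - 1 + 1 + m = j + m from by omega]
      simp only [h1]
      have h2 : ∀ m, q * (q ^ m * F (dd (i + 1 + m) (j + 1 + m))) =
          q ^ (m+1) * F (dd (i + (m+1)) (j + (m+1))) := by
        intro m
        rw [show i + 1 + m = i + (m+1) from by omega, show j + 1 + m = j + (m+1) from by omega]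
        ring
      simp only [h2]
      rw [← Finset.sum_sub_distrib]
      have h3 : ∀ m, q ^ m * F (dd (i + m) (j + m)) - q ^ (m+1) * F (dd (i + (m+1)) (j + (m+1)))
          = (fun k => q ^ k * F (dd (i + k) (j + k))) m
            - (fun k => q ^ k * F (dd (i + k) (j + k))) (m+1) := by intro m; rfl
      simp only [h3]
      rw [Finset.sum_range_sub']
      simp [hn, sub_apply']

lemma N_gq_mul (hn : q ^ n = 0) (H : PS R) (e : Fin 2 →₀ ℕ) :
    NN q n ((gq q * H : PS R)) e = 0 := by
  obtain ⟨i, j, rfl⟩ : ∃ i j, e = dd i j := ⟨e 0, e 1, eq_dd e⟩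
  have hf0 : ∀ (c : ℕ → R) (m : ℕ), n ≤ m + 1 → q ^ (m+1) * c m = 0 := by
    intro c m hm
    have h : q ^ (m+1) = q ^ n * q ^ (m+1-n) := by rw [← pow_add]; congr 1; omega
    rw [h, hn, zero_mul, zero_mul]
  rcases Nat.eq_zero_or_pos j with hj | hj
  · subst hj
    rw [NN_dd0]
    have h1 : ∀ m, q ^ m * ((gq q * H : PS R)) (dd (i + m) m) =
        ((if 1 ≤ m then (fun k => q ^ (k+1) * H (dd (i + k) k)) (m - 1) else 0)
          - (fun k => q ^ (k+1) * H (dd (i + k) k)) m) := by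
      intro m
      rw [coeff_gq_mul]
      simp only [dd11_le, dd_sub_dd11, dd_apply0, dd_apply1]
      rcases Nat.eq_zero_or_pos m with hm | hm
      · subst hm
        rw [if_neg (by omega), if_neg (by omega)]
        ring
      · rw [if_pos (by omega), if_pos (by omega)]
        rw [show i + m - 1 = i + (m - 1) from by omega, show m - 1 + 1 = m from by omega]
        ring
    simp only [h1]
    exact tele n (fun k => q ^ (k+1) * H (dd (i + k) k)) (fun m hm => hf0 (fun k => H (dd (i + k) k)) m hm)
  · rcases Nat.eq_zero_or_pos i with hi | hi
    · subst hi
      rw [NN_dd1 q n _ 0 j (by omega) rfl]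
      have h1 : ∀ m, q ^ m * ((gq q * H : PS R)) (dd m (j + m)) =
          ((if 1 ≤ m then (fun k => q ^ (k+1) * H (dd k (j + k))) (m - 1) else 0)
            - (fun k => q ^ (k+1) * H (dd k (j + k))) m) := by
        intro m
        rw [coeff_gq_mul]
        simp only [dd11_le, dd_sub_dd11, dd_apply0, dd_apply1]
        rcases Nat.eq_zero_or_pos m with hm | hm
        · subst hm
          rw [if_neg (by omega), if_neg (by omega)]
          ring
        · rw [if_pos (by omega), if_pos (by omega)]
          rw [show j + m - 1 = j + (m - 1) from by omega, show m - 1 + 1 = m from by omega]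
          ring
      simp only [h1]
      exact tele n (fun k => q ^ (k+1) * H (dd k (j + k))) (fun m hm => hf0 (fun k => H (dd k (j + k))) m hm)
    · exact NN_off q n _ _ (by simpa using by omega) (by simpa using by omega)

lemma gq_span : Ideal.span {gq q} =
    Ideal.span {MvPowerSeries.X (0 : Fin 2) * MvPowerSeries.X 1 - MvPowerSeries.C (σ := Fin 2) (R := R) q} :=
  rfl

lemma sub_NN_mem (hn : q ^ n = 0) (F : PS R) :
    F - NN q n F ∈
      Ideal.span {MvPowerSeries.X (0 : Fin 2) * MvPowerSeries.X 1
        - MvPowerSeries.C (σ := Fin 2) (R := R) q} := by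
  rw [← gq_span]
  exact Ideal.mem_span_singleton.mpr ⟨GG q n F, MvPowerSeries.ext fun e => N_spec q n hn F e⟩

lemma NN_eq_zero_of_mem (hn : q ^ n = 0) (F : PS R)
    (h : F ∈ Ideal.span {MvPowerSeries.X (0 : Fin 2) * MvPowerSeries.X 1
        - MvPowerSeries.C (σ := Fin 2) (R := R) q}) :
    NN q n F = 0 := by
  rw [← gq_span] at h
  obtain ⟨H, rfl⟩ := Ideal.mem_span_singleton.mp h
  exact MvPowerSeries.ext fun e => N_gq_mul q n hn H e

lemma NN_sub (F G : PS R) : NN q n (F - G) = NN q n F - NN q n G := by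
  apply MvPowerSeries.ext
  intro e
  rw [coeff_eq, coeff_eq, sub_apply']
  simp only [NN, sub_apply', mul_sub, Finset.sum_sub_distrib]
  split_ifs <;> simp

lemma mk_NN (hn : q ^ n = 0) (F : PS R) : nodeMk R q (NN q n F) = nodeMk R q F := by
  rw [Ideal.Quotient.mk_eq_mk_iff_sub_mem]
  have := Submodule.neg_mem _ (sub_NN_mem q n hn F)
  simpa using this

lemma mk_eq_mk_iff (hn : q ^ n = 0) (F G : PS R) :
    nodeMk R q F = nodeMk R q G ↔ NN q n F = NN q n G := by
  constructor
  · intro h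
    rw [Ideal.Quotient.mk_eq_mk_iff_sub_mem] at h
    have := NN_eq_zero_of_mem q n hn _ h
    rw [NN_sub, sub_eq_zero] at this
    exact this
  · intro h
    rw [← mk_NN q n hn F, ← mk_NN q n hn G, h]

lemma NN_C (h1 : 0 < n) (r : R) :
    NN q n (MvPowerSeries.C (σ := Fin 2) (R := R) r) = MvPowerSeries.C (σ := Fin 2) (R := R) r := by
  apply MvPowerSeries.ext
  intro e
  rw [coeff_eq, coeff_eq]
  obtain ⟨i, j, rfl⟩ : ∃ i j, e = dd i j := ⟨e 0, e 1, eq_dd e⟩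
  have hC : ∀ (e' : Fin 2 →₀ ℕ), (MvPowerSeries.C (σ := Fin 2) (R := R) r : PS R) e' =
      if e' = 0 then r else 0 := fun e' => MvPowerSeries.coeff_C e' r
  rcases Nat.eq_zero_or_pos j with hj | hj
  · subst hj
    rw [NN_dd0]
    have hterm : ∀ m ∈ range n, m ≠ 0 →
        q ^ m * (MvPowerSeries.C (σ := Fin 2) (R := R) r : PS R) (dd (i + m) m) = 0 := by
      intro m _ hm
      rw [hC, if_neg (by rw [dd_eq_zero_iff]; omega), mul_zero]
    rw [Finset.sum_eq_single_of_mem 0 (Finset.mem_range.mpr h1) hterm]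
    rw [hC, hC]
    rcases Nat.eq_zero_or_pos i with hi | hi
    · subst hi
      simp
    · rw [if_neg (by rw [dd_eq_zero_iff]; omega), if_neg (by rw [dd_eq_zero_iff]; omega)]
      simp
  · rcases Nat.eq_zero_or_pos i with hi | hi
    · subst hi
      rw [NN_dd1 q n _ 0 j (by omega) rfl]
      rw [hC, if_neg (by rw [dd_eq_zero_iff]; omega)]
      apply Finset.sum_eq_zero
      intro m _
      rw [hC, if_neg (by rw [dd_eq_zero_iff]; omega), mul_zero]
    · rw [NN_off q n _ _ (by simpa using by omega) (by simpa using by omega)]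
      rw [hC, if_neg (by rw [dd_eq_zero_iff]; omega)]

lemma NN_C_mul (r : R) (F : PS R) (e : Fin 2 →₀ ℕ) :
    NN q n ((MvPowerSeries.C (σ := Fin 2) (R := R) r * F : PS R)) e = r * NN q n F e := by
  have hc : ∀ e', ((MvPowerSeries.C (σ := Fin 2) (R := R) r * F : PS R)) e' = r * F e' :=
    fun e' => MvPowerSeries.coeff_C_mul e' F r
  simp only [NN, hc, Finset.mul_sum]
  split_ifs <;> [skip; skip; simp]
  all_goals rw [Finset.mul_sum]; exact Finset.sum_congr rfl fun m _ => by ring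

/-- "constant coefficient" of the normal form -/
noncomputable def E (F : PS R) : R := ∑ m ∈ range n, q ^ m * F (dd m m)

lemma E_eq_NN (F : PS R) : E q n F = NN q n F (dd 0 0) := by
  rw [E, NN_dd0]
  simp

/-- constant coefficient functional on the quotient -/
noncomputable def eps (z : NodeAlg R q) : R :=
  E q n (Function.surjInv Ideal.Quotient.mk_surjective z)

lemma eps_mk (hn : q ^ n = 0) (F : PS R) : eps q n (nodeMk R q F) = E q n F := by
  have h : nodeMk R q (Function.surjInv Ideal.Quotient.mk_surjective (nodeMk R q F)) =
      nodeMk R q F :=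
    Function.surjInv_eq Ideal.Quotient.mk_surjective _
  have h2 := (mk_eq_mk_iff q n hn _ _).mp h
  rw [eps, E_eq_NN, E_eq_NN, h2]

lemma NN_zero : NN q n (0 : PS R) = 0 := by
  apply MvPowerSeries.ext
  intro e
  rw [coeff_eq]
  have zz : ∀ e' : Fin 2 →₀ ℕ, (0 : PS R) e' = 0 := fun _ => rfl
  simp only [NN, zz, mul_zero, Finset.sum_const_zero, map_zero]
  split_ifs <;> rfl

lemma alg_mk (r : R) : algebraMap R (NodeAlg R q) r = nodeMk R q (MvPowerSeries.C (σ := Fin 2) (R := R) r) :=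
  rfl

lemma mkXX : nodeMk R q (MvPowerSeries.X 0) * nodeMk R q (MvPowerSeries.X 1) =
    algebraMap R (NodeAlg R q) q := by
  rw [← map_mul, alg_mk, Ideal.Quotient.mk_eq_mk_iff_sub_mem]
  exact Ideal.subset_span (Set.mem_singleton _)

lemma eps_add (hn : q ^ n = 0) (y z : NodeAlg R q) :
    eps q n (y + z) = eps q n y + eps q n z := by
  obtain ⟨F, rfl⟩ := Ideal.Quotient.mk_surjective y
  obtain ⟨G, rfl⟩ := Ideal.Quotient.mk_surjective z
  rw [← map_add]
  rw [eps_mk q n hn, eps_mk q n hn, eps_mk q n hn]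
  simp only [E, add_apply', mul_add, Finset.sum_add_distrib]

lemma eps_algebraMap (hn : q ^ n = 0) (h1 : 0 < n) (r : R) :
    eps q n (algebraMap R (NodeAlg R q) r) = r := by
  rw [alg_mk, eps_mk q n hn, E_eq_NN, NN_C q n h1]
  have := MvPowerSeries.coeff_C (dd 0 0) r
  rw [coeff_eq] at this
  rw [this, if_pos dd_zero]

lemma eps_eq_zero_of_X0 (hn : q ^ n = 0) (h1 : 0 < n) (z : NodeAlg R q)
    (h : nodeMk R q (MvPowerSeries.X 0) * z = 0) : eps q n z = 0 := by
  obtain ⟨H, rfl⟩ := Ideal.Quotient.mk_surjective z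
  rw [eps_mk q n hn, E_eq_NN]
  set G := NN q n H with hG
  have h2 : nodeMk R q ((MvPowerSeries.X 0 * G : PS R)) = nodeMk R q 0 := by
    rw [map_mul, hG, mk_NN q n hn H, map_zero]
    exact h
  have h3 := (mk_eq_mk_iff q n hn _ _).mp h2
  rw [NN_zero] at h3
  have h5 : NN q n ((MvPowerSeries.X 0 * G : PS R)) (dd 1 0) = 0 := by rw [h3]; rfl
  rw [NN_dd0] at h5
  rw [← h5]
  symm
  rw [Finset.sum_eq_single_of_mem 0 (Finset.mem_range.mpr h1)]
  · rw [coeff_X0_mul, if_pos ((single0_le_dd _ _).mpr (by omega)), dd_sub_single0]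
    norm_num
  · intro m _ hm
    rw [coeff_X0_mul, if_pos ((single0_le_dd _ _).mpr (by omega)), dd_sub_single0, hG,
      NN_off q n H _ (by simp only [dd_apply0]; omega) (by simp only [dd_apply1]; omega),
      mul_zero]

lemma eps_eq_zero_of_X1 (hn : q ^ n = 0) (h1 : 0 < n) (z : NodeAlg R q)
    (h : nodeMk R q (MvPowerSeries.X 1) * z = 0) : eps q n z = 0 := by
  obtain ⟨H, rfl⟩ := Ideal.Quotient.mk_surjective z
  rw [eps_mk q n hn, E_eq_NN]
  set G := NN q n H with hG
  have h2 : nodeMk R q ((MvPowerSeries.X 1 * G : PS R)) = nodeMk R q 0 := by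
    rw [map_mul, hG, mk_NN q n hn H, map_zero]
    exact h
  have h3 := (mk_eq_mk_iff q n hn _ _).mp h2
  rw [NN_zero] at h3
  have h5 : NN q n ((MvPowerSeries.X 1 * G : PS R)) (dd 0 1) = 0 := by rw [h3]; rfl
  rw [NN_dd1 q n _ 0 1 one_ne_zero rfl] at h5
  rw [← h5]
  symm
  rw [Finset.sum_eq_single_of_mem 0 (Finset.mem_range.mpr h1)]
  · rw [coeff_X1_mul, if_pos ((single1_le_dd _ _).mpr (by omega)), dd_sub_single1]
    norm_num
  · intro m _ hm
    rw [coeff_X1_mul, if_pos ((single1_le_dd _ _).mpr (by omega)), dd_sub_single1, hG,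
      NN_off q n H _ (by simp only [dd_apply0]; omega) (by simp only [dd_apply1]; omega),
      mul_zero]

lemma X0_mul_mk_eq_zero (hn : q ^ n = 0) (G : PS R)
    (hs1 : ∀ e : Fin 2 →₀ ℕ, e 0 ≠ 0 → G e = 0)
    (hs2 : ∀ e : Fin 2 →₀ ℕ, e 1 = 0 → G e = 0)
    (hqG : ∀ e : Fin 2 →₀ ℕ, q * G e = 0) :
    nodeMk R q (MvPowerSeries.X 0) * nodeMk R q G = 0 := by
  rw [← map_mul, show (0 : NodeAlg R q) = nodeMk R q 0 from (map_zero _).symm,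
    mk_eq_mk_iff q n hn, NN_zero]
  apply MvPowerSeries.ext
  intro e
  rw [coeff_eq, map_zero]
  obtain ⟨i, j, rfl⟩ : ∃ i j, e = dd i j := ⟨e 0, e 1, eq_dd e⟩
  rcases Nat.eq_zero_or_pos j with hj | hj
  · subst hj
    rw [NN_dd0]
    apply Finset.sum_eq_zero
    intro m _
    rw [coeff_X0_mul]
    by_cases hc : 1 ≤ i + m
    · rw [if_pos ((single0_le_dd _ _).mpr hc), dd_sub_single0]
      rcases Nat.eq_zero_or_pos m with hm | hm
      · subst hm
        rw [hs2 _ (by simp), mul_zero]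
      · by_cases hi' : i + m - 1 = 0
        · have hi0 : i = 0 ∧ m = 1 := by omega
          obtain ⟨rfl, rfl⟩ := hi0
          rw [pow_one]
          exact hqG _
        · rw [hs1 _ (by simp only [dd_apply0]; omega), mul_zero]
    · rw [if_neg (fun hle => hc ((single0_le_dd _ _).mp hle)), mul_zero]
  · rcases Nat.eq_zero_or_pos i with hi | hi
    · subst hi
      rw [NN_dd1 q n _ 0 j (by omega) rfl]
      apply Finset.sum_eq_zero
      intro m _
      rw [coeff_X0_mul]
      rcases Nat.eq_zero_or_pos m with hm | hm
      · subst hm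
        rw [if_neg (fun hle => by simpa using (single0_le_dd _ _).mp hle), mul_zero]
      · rw [if_pos ((single0_le_dd _ _).mpr hm), dd_sub_single0]
        by_cases hm1 : m = 1
        · subst hm1
          rw [pow_one]
          exact hqG _
        · rw [hs1 _ (by simp only [dd_apply0]; omega), mul_zero]
    · rw [NN_off q n _ _ (by simp only [dd_apply0]; omega) (by simp only [dd_apply1]; omega)]

lemma X1_mul_mk_eq_zero (hn : q ^ n = 0) (F : PS R)
    (hs1 : ∀ e : Fin 2 →₀ ℕ, e 1 ≠ 0 → F e = 0)
    (hs2 : ∀ e : Fin 2 →₀ ℕ, e 0 = 0 → F e = 0)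
    (hqF : ∀ e : Fin 2 →₀ ℕ, q * F e = 0) :
    nodeMk R q (MvPowerSeries.X 1) * nodeMk R q F = 0 := by
  rw [← map_mul, show (0 : NodeAlg R q) = nodeMk R q 0 from (map_zero _).symm,
    mk_eq_mk_iff q n hn, NN_zero]
  apply MvPowerSeries.ext
  intro e
  rw [coeff_eq, map_zero]
  obtain ⟨i, j, rfl⟩ : ∃ i j, e = dd i j := ⟨e 0, e 1, eq_dd e⟩
  rcases Nat.eq_zero_or_pos j with hj | hj
  · subst hj
    rw [NN_dd0]
    apply Finset.sum_eq_zero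
    intro m _
    rw [coeff_X1_mul]
    rcases Nat.eq_zero_or_pos m with hm | hm
    · subst hm
      rw [if_neg (fun hle => by simpa using (single1_le_dd _ _).mp hle), mul_zero]
    · rw [if_pos ((single1_le_dd _ _).mpr hm), dd_sub_single1]
      by_cases hm1 : m = 1
      · subst hm1
        rw [pow_one]
        exact hqF _
      · rw [hs1 _ (by simp only [dd_apply1]; omega), mul_zero]
  · rcases Nat.eq_zero_or_pos i with hi | hi
    · subst hi
      rw [NN_dd1 q n _ 0 j (by omega) rfl]
      apply Finset.sum_eq_zero
      intro m _
      rw [coeff_X1_mul, if_pos ((single1_le_dd _ _).mpr (by omega)), dd_sub_single1]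
      by_cases hjm : j + m - 1 = 0
      · have : j = 1 ∧ m = 0 := by omega
        obtain ⟨rfl, rfl⟩ := this
        rw [hs2 _ (by simp), mul_zero]
      · rw [hs1 _ (by simp only [dd_apply1]; omega), mul_zero]
    · rw [NN_off q n _ _ (by simp only [dd_apply0]; omega) (by simp only [dd_apply1]; omega)]

lemma E_sub_dvd (h1 : 0 < n) (F : PS R) : q ∣ E q n F - F 0 := by
  obtain ⟨n', rfl⟩ : ∃ n', n = n' + 1 := ⟨n - 1, by omega⟩
  have h2 : E q (n' + 1) F - F 0 = ∑ m ∈ range n', q ^ (m + 1) * F (dd (m+1) (m+1)) := by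
    rw [E, Finset.sum_range_succ']
    simp [dd_zero, coeff_eq]
  rw [h2]
  apply Finset.dvd_sum
  intro m _
  exact ⟨q ^ m * F (dd (m+1) (m+1)), by ring⟩

lemma eps_mul_sub_dvd (hn : q ^ n = 0) (h1 : 0 < n) (y z : NodeAlg R q) :
    q ∣ eps q n (y * z) - eps q n y * eps q n z := by
  obtain ⟨F, rfl⟩ := Ideal.Quotient.mk_surjective y
  obtain ⟨G, rfl⟩ := Ideal.Quotient.mk_surjective z
  rw [← map_mul, eps_mk q n hn, eps_mk q n hn, eps_mk q n hn]
  have hFG : ((F * G : PS R)) 0 = F 0 * G 0 := by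
    have := map_mul (MvPowerSeries.constantCoeff (σ := Fin 2) (R := R)) F G
    exact this
  have key : E q n ((F * G : PS R)) - E q n F * E q n G =
      (E q n ((F * G : PS R)) - (F * G : PS R) 0)
        - ((E q n F - F 0) * E q n G + F 0 * (E q n G - G 0)) := by
    rw [hFG]; ring
  rw [key]
  exact dvd_sub (E_sub_dvd q n h1 _)
    (dvd_add ((E_sub_dvd q n h1 F).mul_right _) ((E_sub_dvd q n h1 G).mul_left _))

lemma isUnit_of_isUnit_eps (hn : q ^ n = 0) (h1 : 0 < n) (z : NodeAlg R q)
    (h : IsUnit (eps q n z)) : IsUnit z := by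
  obtain ⟨F, rfl⟩ := Ideal.Quotient.mk_surjective z
  rw [eps_mk q n hn] at h
  obtain ⟨t, ht⟩ := E_sub_dvd q n h1 F
  have hF0 : F 0 = E q n F + (-(q * t)) := by rw [← ht]; ring
  have hqnil : IsNilpotent q := ⟨n, hn⟩
  have hnil : IsNilpotent (-(q * t)) :=
    ((Commute.all q t).isNilpotent_mul_right hqnil).neg
  have hunit : IsUnit (F 0) := by
    rw [hF0, add_comm]
    exact IsNilpotent.isUnit_add_right_of_commute hnil h (Commute.all _ _)
  have hFunit : IsUnit F := MvPowerSeries.isUnit_iff_constantCoeff.mpr hunit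
  exact hFunit.map (nodeMk R q)

end NodeAux

open NodeAux in
set_option maxHeartbeats 2000000 in
/- Any isomorphism `R[[x₁,x₂]]/(x₁x₂-q') ≃ R[[x₁,x₂]]/(x₁x₂-q)` (identical on `R`)
sending `(x₁)` to `(x₁)` and `(x₂)` to `(x₂)` is the composite of `x₁ ↦ λx₁, x₂ ↦ x₂`
(for a unique `λ ∈ R^*`, which forces `q' = λq`) with an automorphism
`x₁ ↦ x₁u, x₂ ↦ x₂u⁻¹` from the gluing group. -/
theorem node_iso_factorization (R : Type*) [CommRing R] (q q' : R)
    (hq : IsNilpotent q) (hq' : IsNilpotent q')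
    (α : NodeAlg R q' ≃ₐ[R] NodeAlg R q)
    (hI₁ : Ideal.map α.toAlgHom.toRingHom
        (Ideal.span {nodeMk R q' (MvPowerSeries.X (0 : Fin 2))}) =
      Ideal.span {nodeMk R q (MvPowerSeries.X (0 : Fin 2))})
    (hI₂ : Ideal.map α.toAlgHom.toRingHom
        (Ideal.span {nodeMk R q' (MvPowerSeries.X (1 : Fin 2))}) =
      Ideal.span {nodeMk R q (MvPowerSeries.X (1 : Fin 2))}) :
    ∃! lam : Rˣ,
      q' = (lam : R) * q ∧
      ∃ u : (NodeAlg R q)ˣ,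
        α (nodeMk R q' (MvPowerSeries.X (0 : Fin 2))) =
          algebraMap R (NodeAlg R q) (lam : R) *
            (nodeMk R q (MvPowerSeries.X (0 : Fin 2)) * u) ∧
        α (nodeMk R q' (MvPowerSeries.X (1 : Fin 2))) =
          nodeMk R q (MvPowerSeries.X (1 : Fin 2)) * ↑u⁻¹ := by
  classical
  obtain ⟨n₀, hn₀⟩ := hq
  set n := n₀ + 1 with hndef
  have hn : q ^ n = 0 := by rw [hndef, pow_succ, hn₀, zero_mul]
  have h1 : 0 < n := Nat.succ_pos _
  set X₁ := nodeMk R q (MvPowerSeries.X (0 : Fin 2)) with hX₁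
  set X₂ := nodeMk R q (MvPowerSeries.X (1 : Fin 2)) with hX₂
  set Y₁ := nodeMk R q' (MvPowerSeries.X (0 : Fin 2)) with hY₁
  set Y₂ := nodeMk R q' (MvPowerSeries.X (1 : Fin 2)) with hY₂
  rw [Ideal.map_span, Set.image_singleton] at hI₁ hI₂
  have ha0 : X₁ ∣ α Y₁ := Ideal.span_singleton_le_span_singleton.mp hI₁.le
  have hb0 : α Y₁ ∣ X₁ := Ideal.span_singleton_le_span_singleton.mp hI₁.ge
  have hc0 : X₂ ∣ α Y₂ := Ideal.span_singleton_le_span_singleton.mp hI₂.le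
  have hd0 : α Y₂ ∣ X₂ := Ideal.span_singleton_le_span_singleton.mp hI₂.ge
  obtain ⟨a, ha⟩ := ha0
  obtain ⟨b, hb⟩ := hb0
  obtain ⟨c, hc⟩ := hc0
  obtain ⟨d, hd⟩ := hd0
  rw [ha] at hb
  rw [hc] at hd
  have hXe : X₁ * (1 - a * b) = 0 := by linear_combination hb
  have hXf2 : X₂ * (1 - c * d) = 0 := by linear_combination hd
  have hepsab : eps q n (a * b) = 1 := by
    have h0 := eps_eq_zero_of_X0 q n hn h1 _ hXe
    have h2 := eps_add q n hn (1 - a * b) (a * b)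
    rw [sub_add_cancel, h0, zero_add] at h2
    rw [← h2, show (1 : NodeAlg R q) = algebraMap R (NodeAlg R q) 1 from (map_one _).symm,
      eps_algebraMap q n hn h1]
  have hepscd : eps q n (c * d) = 1 := by
    have h0 := eps_eq_zero_of_X1 q n hn h1 _ hXf2
    have h2 := eps_add q n hn (1 - c * d) (c * d)
    rw [sub_add_cancel, h0, zero_add] at h2
    rw [← h2, show (1 : NodeAlg R q) = algebraMap R (NodeAlg R q) 1 from (map_one _).symm,
      eps_algebraMap q n hn h1]
  -- the key algebra identity
  have hACalg : algebraMap R (NodeAlg R q) q' = algebraMap R (NodeAlg R q) q * (a * c) := by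
    have hYY : Y₁ * Y₂ = algebraMap R (NodeAlg R q') q' := mkXX q'
    have hXX : X₁ * X₂ = algebraMap R (NodeAlg R q) q := mkXX q
    have hcom := α.commutes q'
    calc algebraMap R (NodeAlg R q) q' = α (algebraMap R (NodeAlg R q') q') := hcom.symm
      _ = α (Y₁ * Y₂) := by rw [hYY]
      _ = α Y₁ * α Y₂ := map_mul α _ _
      _ = (X₁ * a) * (X₂ * c) := by rw [ha, hc]
      _ = (X₁ * X₂) * (a * c) := by ring
      _ = _ := by rw [hXX]
  obtain ⟨P, hP⟩ := Ideal.Quotient.mk_surjective (a * c)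
  set W := NN q n P with hW
  have hkey : ∀ e : Fin 2 →₀ ℕ, (MvPowerSeries.C (σ := Fin 2) (R := R) q' : PS R) e = q * W e := by
    have hmk : nodeMk R q (MvPowerSeries.C (σ := Fin 2) (R := R) q') =
        nodeMk R q ((MvPowerSeries.C (σ := Fin 2) (R := R) q * P : PS R)) := by
      rw [← alg_mk, map_mul, ← alg_mk, hP, hACalg]
    have hNN := (mk_eq_mk_iff q n hn _ _).mp hmk
    intro e
    have h2 := NN_C_mul q n q P e
    rw [← hNN, NN_C q n h1] at h2
    exact h2
  set s := W (dd 0 0) with hs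
  have hq's : q' = q * s := by
    have h2 := hkey 0
    have hC0 : (MvPowerSeries.C (σ := Fin 2) (R := R) q' : PS R) 0 = q' := by
      have := MvPowerSeries.coeff_C (0 : Fin 2 →₀ ℕ) q'
      rw [coeff_eq] at this
      rw [this, if_pos rfl]
    rw [hC0, ← dd_zero] at h2
    exact h2
  have hepsac : eps q n (a * c) = s := by
    rw [← hP, eps_mk q n hn, E_eq_NN]
  -- s is a unit
  have hdab := eps_mul_sub_dvd q n hn h1 a b
  have hdcd := eps_mul_sub_dvd q n hn h1 c d
  have hdac := eps_mul_sub_dvd q n hn h1 a c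
  rw [hepsab] at hdab
  rw [hepscd] at hdcd
  rw [hepsac] at hdac
  have hqnil : IsNilpotent q := ⟨n, hn⟩
  have hsw : q ∣ s * (eps q n b * eps q n d) - 1 := by
    have hiden2 : s * (eps q n b * eps q n d) - 1 =
        (s - eps q n a * eps q n c) * (eps q n b * eps q n d)
        - (1 - eps q n a * eps q n b) * (eps q n c * eps q n d)
        - (1 - eps q n c * eps q n d) := by ring
    rw [hiden2]
    exact dvd_sub (dvd_sub (hdac.mul_right _) (hdab.mul_right _)) hdcd
  obtain ⟨t, ht⟩ := hsw
  have hsu : IsUnit (s * (eps q n b * eps q n d)) := by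
    have h2 : s * (eps q n b * eps q n d) = q * t + 1 := by linear_combination ht
    rw [h2]
    exact IsNilpotent.isUnit_add_right_of_commute
      ((Commute.all q t).isNilpotent_mul_right hqnil) isUnit_one (Commute.all _ _)
  have hsUnit : IsUnit s := isUnit_of_mul_isUnit_left hsu
  -- a is a unit
  obtain ⟨t2, ht2⟩ := hdab
  have hau : IsUnit (eps q n a * eps q n b) := by
    have h2 : eps q n a * eps q n b = -(q * t2) + 1 := by linear_combination -ht2
    rw [h2]
    exact IsNilpotent.isUnit_add_right_of_commute
      ((Commute.all q t2).isNilpotent_mul_right hqnil).neg isUnit_one (Commute.all _ _)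
  have haUnit : IsUnit a := isUnit_of_isUnit_eps q n hn h1 a (isUnit_of_mul_isUnit_left hau)
  -- decomposition of W
  set Fx : PS R := (fun e => if e 1 = 0 ∧ e 0 ≠ 0 then W e else 0) with hFx
  set Gy : PS R := (fun e => if e 0 = 0 ∧ e 1 ≠ 0 then W e else 0) with hGy
  have hFxe : ∀ e : Fin 2 →₀ ℕ, Fx e = if e 1 = 0 ∧ e 0 ≠ 0 then W e else 0 := fun _ => rfl
  have hGye : ∀ e : Fin 2 →₀ ℕ, Gy e = if e 0 = 0 ∧ e 1 ≠ 0 then W e else 0 := fun _ => rfl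
  have hWdec : W = MvPowerSeries.C (σ := Fin 2) (R := R) s + Fx + Gy := by
    apply MvPowerSeries.ext
    intro e
    rw [coeff_eq, coeff_eq, add_apply', add_apply', hFxe, hGye]
    have hCe : (MvPowerSeries.C (σ := Fin 2) (R := R) s : PS R) e = if e = 0 then s else 0 :=
      MvPowerSeries.coeff_C e s
    rw [hCe]
    by_cases h0 : e 0 = 0 <;> by_cases h01 : e 1 = 0
    · have he : e = 0 := (zero_iff e).mpr ⟨h0, h01⟩
      rw [if_pos he, if_neg (by tauto), if_neg (by tauto), he, hs, dd_zero]
      ring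
    · rw [if_neg (fun hh => h01 (by rw [hh]; rfl)), if_neg (by tauto), if_pos ⟨h0, h01⟩]
      ring
    · rw [if_neg (fun hh => h0 (by rw [hh]; rfl)), if_pos ⟨h01, h0⟩, if_neg (by tauto)]
      ring
    · rw [if_neg (fun hh => h0 (by rw [hh]; rfl)), if_neg (by tauto), if_neg (by tauto)]
      rw [hW, NN_off q n P e h0 h01]
      ring
  have hqW : ∀ e : Fin 2 →₀ ℕ, e ≠ 0 → q * W e = 0 := by
    intro e he
    have h2 := hkey e
    have hCe : (MvPowerSeries.C (σ := Fin 2) (R := R) q' : PS R) e = 0 := by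
      have := MvPowerSeries.coeff_C e q'
      rw [coeff_eq] at this
      rw [this, if_neg he]
    rw [hCe] at h2
    exact h2.symm
  have hqFx : ∀ e : Fin 2 →₀ ℕ, q * Fx e = 0 := by
    intro e
    rw [hFxe]
    by_cases hcond : e 1 = 0 ∧ e 0 ≠ 0
    · rw [if_pos hcond]
      exact hqW e (fun hh => hcond.2 (by rw [hh]; rfl))
    · rw [if_neg hcond, mul_zero]
  have hqGy : ∀ e : Fin 2 →₀ ℕ, q * Gy e = 0 := by
    intro e
    rw [hGye]
    by_cases hcond : e 0 = 0 ∧ e 1 ≠ 0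
    · rw [if_pos hcond]
      exact hqW e (fun hh => hcond.2 (by rw [hh]; rfl))
    · rw [if_neg hcond, mul_zero]
  have hXGy : X₁ * nodeMk R q Gy = 0 := by
    apply X0_mul_mk_eq_zero q n hn Gy
    · intro e he
      rw [hGye, if_neg (by tauto)]
    · intro e he
      rw [hGye, if_neg (by tauto)]
    · exact hqGy
  have hXFx : X₂ * nodeMk R q Fx = 0 := by
    apply X1_mul_mk_eq_zero q n hn Fx
    · intro e he
      rw [hFxe, if_neg (by tauto)]
    · intro e he
      rw [hFxe, if_neg (by tauto)]
    · exact hqFx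
  have hmkW : nodeMk R q W = a * c := by rw [hW, mk_NN q n hn, hP]
  have hacdec : a * c = algebraMap R (NodeAlg R q) s + nodeMk R q Fx + nodeMk R q Gy := by
    rw [← hmkW, hWdec, map_add, map_add, alg_mk]
  have hsg : IsUnit (algebraMap R (NodeAlg R q) s + nodeMk R q Gy) := by
    apply isUnit_of_isUnit_eps q n hn h1
    have heG : eps q n (nodeMk R q Gy) = 0 := by
      rw [eps_mk q n hn, E]
      apply Finset.sum_eq_zero
      intro m _
      rcases Nat.eq_zero_or_pos m with hm | hm
      · subst hm
        rw [hGye, if_neg (by simp), mul_zero]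
      · rw [hGye, if_neg (by simp only [dd_apply0, dd_apply1]; omega), mul_zero]
    rw [eps_add q n hn, heG, add_zero, eps_algebraMap q n hn h1]
    exact hsUnit
  refine ⟨hsUnit.unit, ⟨?_, ⟨haUnit.unit * hsg.unit⁻¹, ?_, ?_⟩⟩, ?_⟩
  · rw [IsUnit.unit_spec, hq's]
    ring
  · -- first factorization equation
    rw [IsUnit.unit_spec, ha]
    have hvval : (hsg.unit : NodeAlg R q) = algebraMap R (NodeAlg R q) s + nodeMk R q Gy :=
      hsg.unit_spec
    have hvinv : (hsg.unit : NodeAlg R q) * ↑hsg.unit⁻¹ = 1 := hsg.unit.mul_inv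
    have hcast : ((haUnit.unit * hsg.unit⁻¹ : (NodeAlg R q)ˣ) : NodeAlg R q) =
        a * ↑hsg.unit⁻¹ := by
      rw [Units.val_mul, haUnit.unit_spec]
    rw [hcast]
    linear_combination (-(X₁ * a)) * hvinv + (X₁ * a * (↑hsg.unit⁻¹ : NodeAlg R q)) * hvval
      + (a * (↑hsg.unit⁻¹ : NodeAlg R q)) * hXGy
  · -- second factorization equation
    rw [hc]
    have hvval : (hsg.unit : NodeAlg R q) = algebraMap R (NodeAlg R q) s + nodeMk R q Gy :=
      hsg.unit_spec
    have hcast : (((haUnit.unit * hsg.unit⁻¹)⁻¹ : (NodeAlg R q)ˣ) : NodeAlg R q) =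
        ↑hsg.unit * ↑haUnit.unit⁻¹ := by
      rw [mul_inv_rev, inv_inv, Units.val_mul]
    rw [hcast]
    have haa : (↑haUnit.unit : NodeAlg R q) * ↑haUnit.unit⁻¹ = 1 := haUnit.unit.mul_inv
    have hua : (↑haUnit.unit : NodeAlg R q) = a := haUnit.unit_spec
    linear_combination (-(X₂ * c)) * haa
      + (X₂ * (↑haUnit.unit⁻¹ : NodeAlg R q) * c) * hua
      + (X₂ * (↑haUnit.unit⁻¹ : NodeAlg R q)) * hacdec
      - (X₂ * (↑haUnit.unit⁻¹ : NodeAlg R q)) * hvval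
      + ((↑haUnit.unit⁻¹ : NodeAlg R q)) * hXFx
  · -- uniqueness
    rintro y ⟨hy1, u', hu1, hu2⟩
    apply Units.ext
    rw [IsUnit.unit_spec]
    set k := a - algebraMap R (NodeAlg R q) ↑y * ↑u' with hk
    set h2 := c - (↑u'⁻¹ : NodeAlg R q) with hh2
    have hXk : X₁ * k = 0 := by
      rw [hk]
      linear_combination hu1 - ha
    have hXh : X₂ * h2 = 0 := by
      rw [hh2]
      linear_combination hu2 - hc
    have huu : (u' : NodeAlg R q) * ↑u'⁻¹ = 1 := u'.mul_inv
    have hexp : a * c = algebraMap R (NodeAlg R q) ↑y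
        + (algebraMap R (NodeAlg R q) ↑y * ↑u') * h2 + k * ↑u'⁻¹ + k * h2 := by
      rw [hk, hh2]
      linear_combination (algebraMap R (NodeAlg R q) (↑y : R)) * huu
    have e1 : eps q n ((algebraMap R (NodeAlg R q) ↑y * ↑u') * h2) = 0 := by
      apply eps_eq_zero_of_X1 q n hn h1
      linear_combination (algebraMap R (NodeAlg R q) (↑y : R) * ↑u') * hXh
    have e2 : eps q n (k * ↑u'⁻¹) = 0 := by
      apply eps_eq_zero_of_X0 q n hn h1
      linear_combination ((↑u'⁻¹ : NodeAlg R q)) * hXk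
    have e3 : eps q n (k * h2) = 0 := by
      apply eps_eq_zero_of_X0 q n hn h1
      linear_combination h2 * hXk
    have hfin : s = ↑y := by
      rw [← hepsac, hexp, eps_add q n hn, eps_add q n hn, eps_add q n hn, e1, e2, e3,
        eps_algebraMap q n hn h1]
      ring
    exact hfin.symm
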